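/- With the same setup, the Hausdorff-type separation D(M*, N*) = sup_{p ∈ M*} inf_{q ∈ N*} ‖p − q‖ satisfies max_k [D²(M_k, N_k) + ∑_{j≠k} δ²(M_j, N_j)] ≤ D²(M*, N*) ≤ ∑_{j=1}^J Δ²(M_j, N_j), assuming M* projects onto each M_k, N* ⊆ N_1 × ... × N_J, and all sets are compact. -/

import Mathlib

/-- Minimum separation distance between two sets. -/
noncomputable def minSep {α : Type*} [PseudoMetricSpace α] (A B : Set α) : ℝ :=
  sInf (Set.image2 dist A B)

/-- Maximum separation distance between two sets. -/
noncomputable def maxSep {α : Type*} [PseudoMetricSpace α] (A B : Set α) : ℝ :=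
  sSup (Set.image2 dist A B)

/-- One-sided Hausdorff separation distance from A to B. -/
noncomputable def hausSep {α : Type*} [PseudoMetricSpace α] (A B : Set α) : ℝ :=
  sSup ((fun a => Metric.infDist a B) '' A)

lemma bddAbove_image2_dist {α : Type*} [PseudoMetricSpace α] {A B : Set α}
    (hA : IsCompact A) (hB : IsCompact B) : BddAbove (Set.image2 dist A B) := by
  have h : Set.image2 dist A B = (fun p : α × α => dist p.1 p.2) '' (A ×ˢ B) := by
    rw [Set.image_prod]
  rw [h]
  exact ((hA.prod hB).image continuous_dist).bddAbove

lemma bddBelow_image2_dist {α : Type*} [PseudoMetricSpace α] (A B : Set α) :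
    BddBelow (Set.image2 dist A B) := by
  refine ⟨0, ?_⟩
  rintro d ⟨a, _, b, _, rfl⟩
  exact dist_nonneg

lemma minSep_nonneg {α : Type*} [PseudoMetricSpace α] {A B : Set α}
    (hA : A.Nonempty) (hB : B.Nonempty) : 0 ≤ minSep A B := by
  refine le_csInf (hA.image2 hB) ?_
  rintro d ⟨a, _, b, _, rfl⟩
  exact dist_nonneg

theorem joint_hausdorff_separation_bounds {J n : ℕ}
    (M N : Fin J → Set (EuclideanSpace ℝ (Fin n)))
    (Ms Ns : Set (PiLp 2 (fun _ : Fin J => EuclideanSpace ℝ (Fin n))))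
    (hMs : Ms.Nonempty) (hNs : Ns.Nonempty)
    (hMsub : ∀ p ∈ Ms, ∀ j, p j ∈ M j) (hNsub : ∀ q ∈ Ns, ∀ j, q j ∈ N j)
    (hMc : IsCompact Ms) (hNc : IsCompact Ns)
    (hMjc : ∀ j, IsCompact (M j)) (hNjc : ∀ j, IsCompact (N j))
    (hMjne : ∀ j, (M j).Nonempty) (hNjne : ∀ j, (N j).Nonempty)
    (hach : ∀ k : Fin J, ∃ m ∈ M k, Metric.infDist m (N k) = hausSep (M k) (N k))
    (hlift : ∀ k : Fin J, ∀ m ∈ M k,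
      Metric.infDist m (N k) = hausSep (M k) (N k) → ∃ p ∈ Ms, p k = m) :
    (∀ k : Fin J, (hausSep (M k) (N k)) ^ 2 +
        ∑ j ∈ Finset.univ.erase k, (minSep (M j) (N j)) ^ 2 ≤ (hausSep Ms Ns) ^ 2) ∧
      (hausSep Ms Ns) ^ 2 ≤ ∑ j, (maxSep (M j) (N j)) ^ 2 := by
  have hba : BddAbove ((fun a => Metric.infDist a Ns) '' Ms) :=
    (hMc.image (Metric.continuous_infDist_pt Ns)).bddAbove
  constructor
  · intro k
    obtain ⟨m, hmM, hmD⟩ := hach k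
    obtain ⟨p, hpMs, hpk⟩ := hlift k m hmM hmD
    set S : ℝ := hausSep (M k) (N k) ^ 2 +
      ∑ j ∈ Finset.univ.erase k, minSep (M j) (N j) ^ 2 with hSdef
    have hS0 : 0 ≤ S :=
      add_nonneg (sq_nonneg _) (Finset.sum_nonneg fun j _ => sq_nonneg _)
    have hle : Real.sqrt S ≤ Metric.infDist p Ns := by
      obtain ⟨q, hq, hqd⟩ := hNc.exists_infDist_eq_dist hNs p
      rw [hqd, PiLp.dist_eq_of_L2]
      apply Real.sqrt_le_sqrt
      rw [hSdef, ← Finset.add_sum_erase Finset.univ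
        (fun j => dist (p j) (q j) ^ 2) (Finset.mem_univ k)]
      apply add_le_add
      · rw [← hmD]
        have : dist m (q k) = dist (p k) (q k) := by rw [hpk]
        rw [← this]
        exact pow_le_pow_left₀ Metric.infDist_nonneg
          (Metric.infDist_le_dist_of_mem (hNsub q hq k)) 2
      · apply Finset.sum_le_sum
        intro j _
        exact pow_le_pow_left₀ (minSep_nonneg (hMjne j) (hNjne j))
          (csInf_le (bddBelow_image2_dist _ _)
            (Set.mem_image2_of_mem (hMsub p hpMs j) (hNsub q hq j))) 2
    have h2 : Metric.infDist p Ns ≤ hausSep Ms Ns :=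
      le_csSup hba ⟨p, hpMs, rfl⟩
    calc S = Real.sqrt S ^ 2 := (Real.sq_sqrt hS0).symm
      _ ≤ hausSep Ms Ns ^ 2 :=
        pow_le_pow_left₀ (Real.sqrt_nonneg _) (hle.trans h2) 2
  · have hT0 : 0 ≤ ∑ j, maxSep (M j) (N j) ^ 2 :=
      Finset.sum_nonneg fun j _ => sq_nonneg _
    have hub : hausSep Ms Ns ≤ Real.sqrt (∑ j, maxSep (M j) (N j) ^ 2) := by
      apply Real.sSup_le
      · rintro x ⟨p, hp, rfl⟩
        obtain ⟨q, hq⟩ := hNs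
        refine le_trans (Metric.infDist_le_dist_of_mem hq) ?_
        rw [PiLp.dist_eq_of_L2]
        apply Real.sqrt_le_sqrt
        apply Finset.sum_le_sum
        intro j _
        exact pow_le_pow_left₀ dist_nonneg
          (le_csSup (bddAbove_image2_dist (hMjc j) (hNjc j))
            (Set.mem_image2_of_mem (hMsub p hp j) (hNsub q hq j))) 2
      · exact Real.sqrt_nonneg _
    have h0 : 0 ≤ hausSep Ms Ns := by
      obtain ⟨p, hp⟩ := hMs
      exact Metric.infDist_nonneg.trans (le_csSup hba ⟨p, hp, rfl⟩)
    calc hausSep Ms Ns ^ 2 ≤ Real.sqrt (∑ j, maxSep (M j) (N j) ^ 2) ^ 2 :=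
          pow_le_pow_left₀ h0 hub 2
      _ = _ := Real.sq_sqrt hT0
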